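/- (Theorem 1: Scale-Dependent Optimal Composition) Let m ≥ 1, β_i > 0, γ_i > 0 for i = 1,…,m. Let N*(N^{(1)}) and N*(N^{(2)}) be the optimal allocations (minimizers of f(N) = ∑_{i=1}^m β_i · N_i^{-γ_i} on S(N^{(1)}) and S(N^{(2)}) respectively) for two distinct budgets N^{(1)} ≠ N^{(2)}, both positive. Let k > 0 be any real constant, define M ∈ ℝ^m elementwise by M_i = N_i*(N^{(2)}) · ( N_i*(N^{(2)}) / N_i*(N^{(1)}) )^k, and set N^{(3)} = ∑_{i=1}^m M_i. Then M is the optimal allocation at budget N^{(3)}: M minimizes f on S(N^{(3)}). -/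

import Mathlib

open Finset Real

/-- Tangent-line (convexity) inequality for `t ↦ β t^(-γ)` at `w`, evaluated at `z`. -/
lemma tangent_line (β γ w z : ℝ) (hβ : 0 < β) (hγ : 0 < γ) (hw : 0 < w) (hz : 0 < z) :
    β * w ^ (-γ) - β * γ * w ^ (-γ - 1) * (z - w) ≤ β * z ^ (-γ) := by
  set u : ℝ := z / w with hu
  have hupos : 0 < u := div_pos hz hw
  -- key : 1 - γ * (u - 1) ≤ u ^ (-γ)
  have hkey : 1 - γ * (u - 1) ≤ u ^ (-γ) := by
    have h1 : Real.log u ≤ u - 1 := Real.log_le_sub_one_of_pos hupos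
    have h2 : -γ * (u - 1) ≤ -γ * Real.log u := by nlinarith
    have h3 : (Real.log u * (-γ)) + 1 ≤ Real.exp (Real.log u * (-γ)) := Real.add_one_le_exp _
    rw [Real.rpow_def_of_pos hupos]
    nlinarith
  have hzw : z ^ (-γ) = w ^ (-γ) * u ^ (-γ) := by
    rw [hu, Real.div_rpow hz.le hw.le]
    field_simp
  have hwpow : 0 < w ^ (-γ) := Real.rpow_pos_of_pos hw _
  have hw1 : w ^ (-γ - 1) * w = w ^ (-γ) := by
    have := Real.rpow_add hw (-γ - 1) 1
    simp only [Real.rpow_one] at this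
    rw [← this]; ring_nf
  have hmul : β * w ^ (-γ) * (1 - γ * (u - 1)) ≤ β * w ^ (-γ) * u ^ (-γ) :=
    mul_le_mul_of_nonneg_left hkey (by positivity)
  rw [hzw]
  have huw : w * (u - 1) = z - w := by
    rw [hu, mul_sub, mul_div_assoc', mul_div_cancel_left₀ z hw.ne', mul_one]
  have heq : β * γ * w ^ (-γ - 1) * (z - w) = β * γ * w ^ (-γ) * (u - 1) := by
    rw [← huw, ← hw1]; ring
  nlinarith [hmul, heq]

/-- Stationarity (equal marginals) implies global minimality on the budget simplex. -/
lemma stationary_min (m : ℕ) (β γ : Fin m → ℝ) (hβ : ∀ i, 0 < β i) (hγ : ∀ i, 0 < γ i)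
    (w : Fin m → ℝ) (hw : ∀ i, 0 < w i) (lam : ℝ)
    (hlam : ∀ i, β i * γ i * w i ^ (-γ i - 1) = lam)
    (z : Fin m → ℝ) (hz : ∀ i, 0 < z i) (hsum : ∑ i, z i = ∑ i, w i) :
    ∑ i, β i * w i ^ (-γ i) ≤ ∑ i, β i * z i ^ (-γ i) := by
  have h : ∀ i, β i * w i ^ (-γ i) - lam * (z i - w i) ≤ β i * z i ^ (-γ i) := by
    intro i
    have := tangent_line (β i) (γ i) (w i) (z i) (hβ i) (hγ i) (hw i) (hz i)
    rw [hlam i] at this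
    linarith
  calc ∑ i, β i * w i ^ (-γ i)
      = ∑ i, (β i * w i ^ (-γ i) - lam * (z i - w i)) := by
        rw [Finset.sum_sub_distrib, ← Finset.mul_sum, Finset.sum_sub_distrib, hsum]
        ring
    _ ≤ ∑ i, β i * z i ^ (-γ i) := Finset.sum_le_sum fun i _ => h i

/-- At a minimizer of `f` on the budget simplex, the marginals are all equal. -/
lemma min_marginals (m : ℕ) (β γ : Fin m → ℝ) (hβ : ∀ i, 0 < β i) (hγ : ∀ i, 0 < γ i)
    (N : ℝ) (x : Fin m → ℝ) (hx_pos : ∀ i, 0 < x i) (hx_sum : ∑ i, x i = N)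
    (hx_min : ∀ z : Fin m → ℝ, (∀ i, 0 < z i) → ∑ i, z i = N →
      ∑ i, β i * x i ^ (-γ i) ≤ ∑ i, β i * z i ^ (-γ i))
    (i j : Fin m) :
    β i * γ i * x i ^ (-γ i - 1) = β j * γ j * x j ^ (-γ j - 1) := by
  rcases eq_or_ne i j with rfl | hij
  · rfl
  -- perturbation function
  set φ : ℝ → ℝ := fun t => β i * (x i + t) ^ (-γ i) + β j * (x j - t) ^ (-γ j) with hφ
  have hmin : IsLocalMin φ 0 := by
    have hmem : Set.Ioo (-(min (x i) (x j))) (min (x i) (x j)) ∈ nhds (0 : ℝ) :=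
      Ioo_mem_nhds (by simp [hx_pos i, hx_pos j]) (by simp [hx_pos i, hx_pos j])
    filter_upwards [hmem] with t ht
    obtain ⟨ht1, ht2⟩ := ht
    set z : Fin m → ℝ := fun l => x l + (if l = i then t else 0) + (if l = j then -t else 0)
      with hz
    have hzi : z i = x i + t := by simp [hz, hij]
    have hzj : z j = x j - t := by simp [hz, Ne.symm hij]; ring
    have hzpos : ∀ l, 0 < z l := by
      intro l
      rcases eq_or_ne l i with rfl | hli
      · rw [hzi]; linarith [min_le_left (x l) (x j)]
      rcases eq_or_ne l j with rfl | hlj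
      · rw [hzj]; linarith [min_le_right (x i) (x l)]
      · simp [hz, hli, hlj]; exact hx_pos l
    have hzsum : ∑ l, z l = N := by
      simp only [hz, Finset.sum_add_distrib, Finset.sum_ite_eq', Finset.mem_univ, if_true,
        hx_sum]
      ring
    have hle := hx_min z hzpos hzsum
    -- difference of sums concentrates on i and j
    have hdiff : ∀ l, β l * z l ^ (-γ l) - β l * x l ^ (-γ l) =
        (if l = i then β i * (x i + t) ^ (-γ i) - β i * x i ^ (-γ i) else 0) +
        (if l = j then β j * (x j - t) ^ (-γ j) - β j * x j ^ (-γ j) else 0) := by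
      intro l
      rcases eq_or_ne l i with rfl | hli
      · simp [hzi, hij]
      rcases eq_or_ne l j with rfl | hlj
      · simp [hzj, hli]
      · simp [hz, hli, hlj]
    have hsumdiff : ∑ l, (β l * z l ^ (-γ l) - β l * x l ^ (-γ l)) =
        (β i * (x i + t) ^ (-γ i) - β i * x i ^ (-γ i)) +
        (β j * (x j - t) ^ (-γ j) - β j * x j ^ (-γ j)) := by
      rw [Finset.sum_congr rfl fun l _ => hdiff l, Finset.sum_add_distrib,
        Finset.sum_ite_eq', Finset.sum_ite_eq']
      simp
    have hsub : ∑ l, (β l * z l ^ (-γ l) - β l * x l ^ (-γ l)) =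
        ∑ l, β l * z l ^ (-γ l) - ∑ l, β l * x l ^ (-γ l) := Finset.sum_sub_distrib _ _
    simp only [hφ, add_zero, sub_zero]
    rw [hsub] at hsumdiff
    linarith
  have hdi : HasDerivAt (fun t : ℝ => β i * (x i + t) ^ (-γ i))
      (β i * (1 * (-γ i) * (x i + 0) ^ (-γ i - 1))) 0 := by
    exact ((hasDerivAt_id (0:ℝ)).const_add (x i)).rpow_const
      (Or.inl (by simpa using (hx_pos i).ne')) |>.const_mul (β i)
  have hdj : HasDerivAt (fun t : ℝ => β j * (x j - t) ^ (-γ j))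
      (β j * ((-1) * (-γ j) * (x j - 0) ^ (-γ j - 1))) 0 := by
    have h1 : HasDerivAt (fun t : ℝ => x j - t) (-1) 0 := by
      simpa using ((hasDerivAt_id (0:ℝ)).const_sub (x j))
    exact (h1.rpow_const (Or.inl (by simpa using (hx_pos j).ne'))).const_mul (β j)
  have hD : HasDerivAt φ (β i * (1 * (-γ i) * (x i + 0) ^ (-γ i - 1)) +
      β j * ((-1) * (-γ j) * (x j - 0) ^ (-γ j - 1))) 0 := hdi.add hdj
  have h0 := hmin.hasDerivAt_eq_zero hD
  simp only [add_zero, sub_zero, one_mul, neg_one_mul, neg_neg] at h0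
  nlinarith [h0]

/-- Theorem 1 (Scale-Dependent Optimal Composition): given the optimal
allocations at two distinct positive budgets `N⁽¹⁾ ≠ N⁽²⁾` and any `k > 0`,
the elementwise allocation `M i = N_i*(N⁽²⁾) · (N_i*(N⁽²⁾)/N_i*(N⁽¹⁾))^k`
is the optimal allocation for the budget `N⁽³⁾ = ∑ i, M i`. -/
theorem scale_dependent_optimal_composition (m : ℕ) (hm : 1 ≤ m)
    (β γ : Fin m → ℝ) (hβ : ∀ i, 0 < β i) (hγ : ∀ i, 0 < γ i)
    (N₁ N₂ : ℝ) (hN₁ : 0 < N₁) (hN₂ : 0 < N₂) (hne : N₁ ≠ N₂)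
    (x : Fin m → ℝ) (hx_pos : ∀ i, 0 < x i) (hx_sum : ∑ i, x i = N₁)
    (hx_min : ∀ z : Fin m → ℝ, (∀ i, 0 < z i) → ∑ i, z i = N₁ →
      ∑ i, β i * x i ^ (-γ i) ≤ ∑ i, β i * z i ^ (-γ i))
    (y : Fin m → ℝ) (hy_pos : ∀ i, 0 < y i) (hy_sum : ∑ i, y i = N₂)
    (hy_min : ∀ z : Fin m → ℝ, (∀ i, 0 < z i) → ∑ i, z i = N₂ →
      ∑ i, β i * y i ^ (-γ i) ≤ ∑ i, β i * z i ^ (-γ i))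
    (k : ℝ) (hk : 0 < k)
    (M : Fin m → ℝ) (hM : ∀ i, M i = y i * (y i / x i) ^ k)
    (N₃ : ℝ) (hN₃ : N₃ = ∑ i, M i) :
    (∀ i, 0 < M i) ∧ ∑ i, M i = N₃ ∧
      ∀ z : Fin m → ℝ, (∀ i, 0 < z i) → ∑ i, z i = N₃ →
        ∑ i, β i * M i ^ (-γ i) ≤ ∑ i, β i * z i ^ (-γ i) := by
  have hM_pos : ∀ i, 0 < M i := by
    intro i; rw [hM i]
    have := Real.rpow_pos_of_pos (div_pos (hy_pos i) (hx_pos i)) k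
    exact mul_pos (hy_pos i) this
  refine ⟨hM_pos, hN₃.symm, ?_⟩
  intro z hz hzsum
  set i0 : Fin m := ⟨0, hm⟩ with hi0
  set lam₁ : ℝ := β i0 * γ i0 * x i0 ^ (-γ i0 - 1) with hlam₁def
  set lam₂ : ℝ := β i0 * γ i0 * y i0 ^ (-γ i0 - 1) with hlam₂def
  have hlam₁ : ∀ i, β i * γ i * x i ^ (-γ i - 1) = lam₁ := fun i =>
    min_marginals m β γ hβ hγ N₁ x hx_pos hx_sum hx_min i i0
  have hlam₂ : ∀ i, β i * γ i * y i ^ (-γ i - 1) = lam₂ := fun i =>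
    min_marginals m β γ hβ hγ N₂ y hy_pos hy_sum hy_min i i0
  have hlam₁pos : 0 < lam₁ :=
    mul_pos (mul_pos (hβ i0) (hγ i0)) (Real.rpow_pos_of_pos (hx_pos i0) _)
  have hlam₂pos : 0 < lam₂ :=
    mul_pos (mul_pos (hβ i0) (hγ i0)) (Real.rpow_pos_of_pos (hy_pos i0) _)
  -- marginal of M is constant
  have hMlam : ∀ i, β i * γ i * M i ^ (-γ i - 1) = lam₂ * (lam₂ / lam₁) ^ k := by
    intro i
    have hxp : 0 < x i ^ (-γ i - 1) := Real.rpow_pos_of_pos (hx_pos i) _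
    have hyp : 0 < y i ^ (-γ i - 1) := Real.rpow_pos_of_pos (hy_pos i) _
    have hq : 0 < y i / x i := div_pos (hy_pos i) (hx_pos i)
    have hMpow : M i ^ (-γ i - 1) =
        y i ^ (-γ i - 1) * (y i ^ (-γ i - 1) / x i ^ (-γ i - 1)) ^ k := by
      rw [hM i, Real.mul_rpow (hy_pos i).le (Real.rpow_pos_of_pos hq k).le]
      congr 1
      rw [← Real.rpow_mul hq.le k (-γ i - 1), mul_comm, Real.rpow_mul hq.le (-γ i - 1) k,
        Real.div_rpow (hy_pos i).le (hx_pos i).le]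
    have hba : y i ^ (-γ i - 1) / x i ^ (-γ i - 1) = lam₂ / lam₁ := by
      rw [← hlam₁ i, ← hlam₂ i]
      have h1 : β i * γ i ≠ 0 := ne_of_gt (mul_pos (hβ i) (hγ i))
      rw [mul_div_mul_left _ _ h1]
    rw [hMpow, hba, ← hlam₂ i]
    ring
  exact stationary_min m β γ hβ hγ M hM_pos (lam₂ * (lam₂ / lam₁) ^ k) hMlam z hz
    (hzsum.trans hN₃)
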